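/- For every real number s > 1, ζ(s) = lim_{q→∞} (π/(2q))^s · Σ_{p=1}^{q-1} cot^s(pπ/(2q)). -/

import Mathlib

open Real Filter Finset

lemma my_cot_nonneg {x : ℝ} (h1 : 0 < x) (h2 : x < π / 2) : 0 ≤ Real.cot x := by
  rw [Real.cot_eq_cos_div_sin]
  have hc : 0 < Real.cos x := Real.cos_pos_of_mem_Ioo ⟨by linarith [Real.pi_pos], h2⟩
  have hsin : 0 < Real.sin x := Real.sin_pos_of_pos_of_lt_pi h1 (by linarith [Real.pi_pos])
  positivity

lemma my_cot_le {x : ℝ} (h1 : 0 < x) (h2 : x < π / 2) : Real.cot x ≤ 1 / x := by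
  have hc : 0 < Real.cos x := Real.cos_pos_of_mem_Ioo ⟨by linarith [Real.pi_pos], h2⟩
  have hsin : 0 < Real.sin x := Real.sin_pos_of_pos_of_lt_pi h1 (by linarith [Real.pi_pos])
  have ht := Real.lt_tan h1 h2
  rw [Real.tan_eq_sin_div_cos, lt_div_iff₀ hc] at ht
  rw [Real.cot_eq_cos_div_sin, div_le_div_iff₀ hsin h1]
  nlinarith

lemma my_xcot : Tendsto (fun x : ℝ => x * Real.cot x) (nhdsWithin 0 (Set.Ioi 0)) (nhds 1) := by
  have hs : Tendsto (fun x : ℝ => Real.sin x / x) (nhdsWithin 0 {0}ᶜ) (nhds 1) := by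
    have h := Real.hasDerivAt_sin 0
    rw [hasDerivAt_iff_tendsto_slope] at h
    have h2 : Tendsto (fun b : ℝ => b⁻¹ * Real.sin b) (nhdsWithin 0 {0}ᶜ) (nhds 1) := by
      simpa [slope_fun_def, Real.sin_zero, Real.cos_zero] using h
    refine h2.congr (fun x => ?_)
    rw [div_eq_inv_mul]
  have hinv : Tendsto (fun x : ℝ => x / Real.sin x) (nhdsWithin 0 {0}ᶜ) (nhds 1) := by
    have h2 := hs.inv₀ one_ne_zero
    rw [inv_one] at h2
    refine h2.congr (fun x => ?_)
    rw [div_eq_mul_inv, mul_inv, inv_inv, div_eq_mul_inv]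
    ring
  have hcos : Tendsto (fun x : ℝ => Real.cos x) (nhdsWithin 0 {0}ᶜ) (nhds 1) := by
    have h2 : Tendsto (fun x : ℝ => Real.cos x) (nhdsWithin 0 {0}ᶜ) (nhds (Real.cos 0)) :=
      (Real.continuous_cos.tendsto 0).mono_left nhdsWithin_le_nhds
    simpa using h2
  have hmul : Tendsto (fun x : ℝ => Real.cos x * (x / Real.sin x)) (nhdsWithin 0 {0}ᶜ)
      (nhds 1) := by simpa using hcos.mul hinv
  have hmono : Tendsto (fun x : ℝ => Real.cos x * (x / Real.sin x)) (nhdsWithin 0 (Set.Ioi 0))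
      (nhds 1) := hmul.mono_left (nhdsWithin_mono 0 (fun x hx => ne_of_gt hx))
  refine hmono.congr (fun x => ?_)
  rw [Real.cot_eq_cos_div_sin]
  ring

theorem zeta_cot_limit_even (s : ℝ) (hs : 1 < s) :
    Tendsto (fun q : ℕ =>
        (π / (2 * q)) ^ s * ∑ p ∈ Finset.Icc 1 (q - 1), (Real.cot (p * π / (2 * q))) ^ s)
      atTop (nhds (∑' n : ℕ, 1 / ((n : ℝ) + 1) ^ s)) := by
  have hπ := Real.pi_pos
  have hs0 : (0:ℝ) ≤ s := by linarith
  set f : ℕ → ℕ → ℝ := fun q n =>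
    if n < q - 1 then (π / (2 * q)) ^ s * (Real.cot (((n:ℝ) + 1) * π / (2 * q))) ^ s else 0
    with hf
  -- basic bounds on the terms
  have hx_bound : ∀ q n : ℕ, n < q - 1 →
      0 < ((n:ℝ)+1) * π / (2 * q) ∧ ((n:ℝ)+1) * π / (2 * q) < π / 2 := by
    intro q n h
    have hq2 : 2 ≤ q := by omega
    have hq0 : (0:ℝ) < q := by exact_mod_cast (by omega : 0 < q)
    constructor
    · positivity
    · rw [div_lt_div_iff₀ (by positivity) (by norm_num)]
      have hlt : (n:ℝ) + 1 < q := by exact_mod_cast (by omega : n + 1 < q)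
      nlinarith
  have h_bound : ∀ q : ℕ, ∀ n : ℕ, ‖f q n‖ ≤ 1 / ((n:ℝ) + 1) ^ s := by
    intro q n
    have hc : (0:ℝ) < (n:ℝ) + 1 := by positivity
    by_cases h : n < q - 1
    · obtain ⟨hx0, hx2⟩ := hx_bound q n h
      have hq0 : (0:ℝ) < q := by exact_mod_cast (by omega : 0 < q)
      have hcot0 := my_cot_nonneg hx0 hx2
      have hcot1 := my_cot_le hx0 hx2
      have hp0 : (0:ℝ) ≤ π / (2 * q) := by positivity
      have key : π / (2 * q) * Real.cot (((n:ℝ)+1) * π / (2 * q)) ≤ 1 / ((n:ℝ)+1) := by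
        calc π / (2 * q) * Real.cot (((n:ℝ)+1) * π / (2 * q))
            ≤ π / (2 * q) * (1 / (((n:ℝ)+1) * π / (2 * q))) :=
              mul_le_mul_of_nonneg_left hcot1 hp0
          _ = 1 / ((n:ℝ)+1) := by
              have hq' : (q:ℝ) ≠ 0 := hq0.ne'
              field_simp
      have : f q n = (π / (2 * q) * Real.cot (((n:ℝ)+1) * π / (2 * q))) ^ s := by
        rw [hf]; simp only [if_pos h]
        rw [Real.mul_rpow hp0 hcot0]
      rw [this, Real.norm_eq_abs, abs_of_nonneg (by positivity)]
      calc (π / (2 * q) * Real.cot (((n:ℝ)+1) * π / (2 * q))) ^ s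
          ≤ (1 / ((n:ℝ)+1)) ^ s := Real.rpow_le_rpow (by positivity) key hs0
        _ = 1 / ((n:ℝ)+1) ^ s := by
            rw [Real.div_rpow (by norm_num) hc.le, Real.one_rpow]
    · rw [hf]; simp only [if_neg h, norm_zero]
      positivity
  -- summability of the bound
  have h_sum : Summable (fun n : ℕ => 1 / ((n:ℝ) + 1) ^ s) := by
    have h1 : Summable (fun n : ℕ => 1 / ((n:ℝ)) ^ s) := Real.summable_one_div_nat_rpow.2 hs
    have h2 := h1.comp_injective Nat.succ_injective
    refine h2.congr (fun n => ?_)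
    simp only [Function.comp_apply, Nat.succ_eq_add_one]
    push_cast
    ring_nf
  -- pointwise limits
  have hab : ∀ n : ℕ, Tendsto (fun q => f q n) atTop (nhds (1 / ((n:ℝ) + 1) ^ s)) := by
    intro n
    set c : ℝ := (n:ℝ) + 1 with hc_def
    have hc : 0 < c := by positivity
    have hu : Tendsto (fun q : ℕ => c * π / (2 * q)) atTop (nhdsWithin 0 (Set.Ioi 0)) := by
      rw [tendsto_nhdsWithin_iff]
      constructor
      · have h0 : Tendsto (fun q : ℕ => (c * π / 2) * (1 / q)) atTop (nhds ((c * π / 2) * 0)) :=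
          tendsto_const_nhds.mul tendsto_one_div_atTop_nhds_zero_nat
        rw [mul_zero] at h0
        refine h0.congr (fun q => ?_)
        rw [mul_one_div, div_div]
      · filter_upwards [eventually_ge_atTop 1] with q hq
        have hq0 : (0:ℝ) < q := by exact_mod_cast (by omega : 0 < q)
        exact Set.mem_Ioi.2 (by positivity)
    have h1 : Tendsto (fun q : ℕ => (c * π / (2 * q)) * Real.cot (c * π / (2 * q)))
        atTop (nhds 1) := my_xcot.comp hu
    have h2 : Tendsto (fun q : ℕ => ((c * π / (2 * q)) * Real.cot (c * π / (2 * q))) / c)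
        atTop (nhds (1 / c)) := h1.div_const c
    have h3 : Tendsto (fun q : ℕ => (π / (2 * q)) * Real.cot (c * π / (2 * q)))
        atTop (nhds (1 / c)) := by
      refine h2.congr (fun q => ?_)
      have heq : c * π / (2 * (q:ℝ)) / c = π / (2 * (q:ℝ)) := by
        rw [mul_comm c π, mul_div_right_comm, mul_div_assoc, div_self hc.ne', mul_one]
      rw [mul_div_right_comm, heq]
    have h4 : Tendsto (fun q : ℕ => ((π / (2 * q)) * Real.cot (c * π / (2 * q))) ^ s)
        atTop (nhds ((1 / c) ^ s)) :=
      ((Real.continuousAt_rpow_const (1/c) s (Or.inl (by positivity))).tendsto).comp h3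
    have h5 : (1 / c) ^ s = 1 / c ^ s := by
      rw [Real.div_rpow (by norm_num) hc.le, Real.one_rpow]
    rw [h5] at h4
    refine h4.congr' ?_
    filter_upwards [eventually_ge_atTop (n + 2)] with q hq
    have h : n < q - 1 := by omega
    obtain ⟨hx0, hx2⟩ := hx_bound q n h
    have hq0 : (0:ℝ) < q := by exact_mod_cast (by omega : 0 < q)
    rw [hf]; simp only [if_pos h]
    rw [Real.mul_rpow (by positivity) (my_cot_nonneg hx0 hx2)]
  have main := tendsto_tsum_of_dominated_convergence h_sum hab
    (Eventually.of_forall h_bound)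
  refine main.congr' ?_
  filter_upwards [eventually_ge_atTop 2] with q hq
  have hq1 : 1 ≤ q := by omega
  -- rewrite tsum as finite sum
  have htsum : ∑' n, f q n = ∑ n ∈ Finset.range (q - 1), f q n := by
    refine tsum_eq_sum (fun n hn => ?_)
    rw [Finset.mem_range, not_lt] at hn
    rw [hf]; simp only [if_neg (by omega : ¬ n < q - 1)]
  rw [htsum]
  have hIcc : Finset.Icc 1 (q - 1) = Finset.Ico 1 q := by
    rw [← Finset.Ico_add_one_right_eq_Icc]
    congr 1
    omega
  rw [hIcc, Finset.sum_Ico_eq_sum_range]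
  rw [Finset.mul_sum]
  refine Finset.sum_congr rfl (fun i hi => ?_)
  rw [Finset.mem_range] at hi
  rw [hf]; simp only [if_pos (by omega : i < q - 1)]
  push_cast
  ring_nf
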